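/- A ≤⋄ B if and only if B† B A† A = A† B A† A = A† A and A A† B B† = A A† B A† = A A†. -/
import Mathlib


open Matrix

/-- Column space (range) of a complex matrix. -/
noncomputable def mrange {m n : Type*} [Fintype n] (A : Matrix m n ℂ) : Submodule ℂ (m → ℂ) :=
  LinearMap.range A.mulVecLin

/-- The diamond partial order on rectangular complex matrices. -/
def diamondLE {m n : Type*} [Fintype m] [Fintype n] (A B : Matrix m n ℂ) : Prop :=
  mrange A ≤ mrange B ∧ mrange Aᴴ ≤ mrange Bᴴ ∧ A * Bᴴ * A = A * Aᴴ * A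

/-- `X` satisfies the four Penrose equations for `A`. -/
def IsMP {m n : Type*} [Fintype m] [Fintype n] (A : Matrix m n ℂ) (X : Matrix n m ℂ) : Prop :=
  A * X * A = A ∧ X * A * X = X ∧ (A * X)ᴴ = A * X ∧ (X * A)ᴴ = X * A

section aux

variable {m n : ℕ}

lemma matrix_ext_mulVec {A B : Matrix (Fin m) (Fin n) ℂ}
    (h : ∀ x, A *ᵥ x = B *ᵥ x) : A = B := by
  have : A.mulVecLin = B.mulVecLin := LinearMap.ext h
  have h2 : Matrix.toLin' A = Matrix.toLin' B := by
    rw [Matrix.toLin'_apply', Matrix.toLin'_apply', this]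
  exact Matrix.toLin'.injective h2

lemma range_le_iff {A B : Matrix (Fin m) (Fin n) ℂ} {Bd : Matrix (Fin n) (Fin m) ℂ}
    (hBd : B * Bd * B = B) : mrange A ≤ mrange B ↔ B * Bd * A = A := by
  constructor
  · intro h
    apply matrix_ext_mulVec
    intro x
    obtain ⟨y, hy⟩ := h ⟨x, rfl⟩
    simp only [mulVecLin_apply] at hy
    calc (B * Bd * A) *ᵥ x = (B * Bd) *ᵥ (A *ᵥ x) := by
          rw [← mulVec_mulVec]
      _ = (B * Bd) *ᵥ (B *ᵥ y) := by rw [hy]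
      _ = (B * Bd * B) *ᵥ y := by rw [mulVec_mulVec]
      _ = B *ᵥ y := by rw [hBd]
      _ = A *ᵥ x := hy
  · intro h
    have : A = B * (Bd * A) := by rw [← Matrix.mul_assoc, h]
    rw [mrange, mrange, this, Matrix.mulVecLin_mul]
    exact LinearMap.range_comp_le_range _ _

lemma mp_ct {A : Matrix (Fin m) (Fin n) ℂ} {Ad : Matrix (Fin n) (Fin m) ℂ}
    (h : IsMP A Ad) : IsMP Aᴴ Adᴴ := by
  obtain ⟨h1, h2, h3, h4⟩ := h
  refine ⟨?_, ?_, ?_, ?_⟩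
  · have := congrArg conjTranspose h1
    simp only [conjTranspose_mul, ← Matrix.mul_assoc] at this
    exact this
  · have := congrArg conjTranspose h2
    simp only [conjTranspose_mul, ← Matrix.mul_assoc] at this
    exact this
  · simp only [← conjTranspose_mul, h4]
  · simp only [← conjTranspose_mul, h3]

end aux

theorem stmt14 {m n : ℕ} (A B : Matrix (Fin m) (Fin n) ℂ) (Ad Bd : Matrix (Fin n) (Fin m) ℂ)
    (hAd : IsMP A Ad) (hBd : IsMP B Bd) :
    diamondLE A B ↔
      (Bd * B * (Ad * A) = Ad * B * (Ad * A) ∧ Ad * B * (Ad * A) = Ad * A ∧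
       A * Ad * (B * Bd) = A * Ad * (B * Ad) ∧ A * Ad * (B * Ad) = A * Ad) := by
  obtain ⟨a1, a2, a3, a4⟩ := hAd
  obtain ⟨b1, b2, b3, b4⟩ := hBd
  -- derived identities
  have h1 : Ad * Adᴴ * Aᴴ = Ad := by
    rw [Matrix.mul_assoc, ← conjTranspose_mul, a3, ← Matrix.mul_assoc, a2]
  have h2 : Aᴴ * Adᴴ * Ad = Ad := by
    rw [← conjTranspose_mul, a4, Matrix.mul_assoc, ← Matrix.mul_assoc, a2]
  have h3 : A * Aᴴ * Adᴴ = A := by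
    rw [Matrix.mul_assoc, ← conjTranspose_mul, a4, ← Matrix.mul_assoc, a1]
  have h4 : Adᴴ * Aᴴ * A = A := by
    rw [← conjTranspose_mul, a3, Matrix.mul_assoc, ← Matrix.mul_assoc, a1]
  -- the core equivalence: A * Bᴴ * A = A * Aᴴ * A ↔ Ad * B * Ad = Ad
  have core : A * Bᴴ * A = A * Aᴴ * A ↔ Ad * B * Ad = Ad := by
    constructor
    · intro hc
      have hc' : Aᴴ * B * Aᴴ = Aᴴ * A * Aᴴ := by
        have := congrArg conjTranspose hc
        simpa [conjTranspose_mul, Matrix.mul_assoc] using this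
      calc Ad * B * Ad = (Ad * Adᴴ * Aᴴ) * B * (Aᴴ * Adᴴ * Ad) := by rw [h1, h2]
        _ = Ad * Adᴴ * (Aᴴ * B * Aᴴ) * Adᴴ * Ad := by
            simp only [Matrix.mul_assoc]
        _ = Ad * Adᴴ * (Aᴴ * A * Aᴴ) * Adᴴ * Ad := by rw [hc']
        _ = (Ad * Adᴴ * Aᴴ) * A * (Aᴴ * Adᴴ * Ad) := by
            simp only [Matrix.mul_assoc]
        _ = Ad * A * Ad := by rw [h1, h2]
        _ = Ad := a2
    · intro hc
      have hc' : Adᴴ * Bᴴ * Adᴴ = Adᴴ := by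
        have := congrArg conjTranspose hc
        simpa [conjTranspose_mul, Matrix.mul_assoc] using this
      calc A * Bᴴ * A = (A * Aᴴ * Adᴴ) * Bᴴ * (Adᴴ * Aᴴ * A) := by rw [h3, h4]
        _ = A * Aᴴ * (Adᴴ * Bᴴ * Adᴴ) * Aᴴ * A := by simp only [Matrix.mul_assoc]
        _ = A * Aᴴ * Adᴴ * Aᴴ * A := by rw [hc']
        _ = (A * Aᴴ * Adᴴ) * (Aᴴ * A) := by simp only [Matrix.mul_assoc]
        _ = A * Aᴴ * A := by rw [h3, Matrix.mul_assoc]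
  rw [diamondLE, range_le_iff b1, range_le_iff (mp_ct ⟨b1, b2, b3, b4⟩).1, core]
  constructor
  · rintro ⟨hr1, hr2, hc⟩
    -- hr2 : Bᴴ * Bdᴴ * Aᴴ = Aᴴ
    have hr2' : Bd * B * Aᴴ = Aᴴ := by
      rw [show Bd * B = Bᴴ * Bdᴴ by rw [← conjTranspose_mul, b4]]; exact hr2
    have e2 : Ad * B * (Ad * A) = Ad * A := by
      rw [← Matrix.mul_assoc, hc]
    have e4 : A * Ad * (B * Ad) = A * Ad := by
      calc A * Ad * (B * Ad) = A * (Ad * B * Ad) := by simp only [Matrix.mul_assoc]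
        _ = A * Ad := by rw [hc]
    refine ⟨?_, e2, ?_, e4⟩
    · -- Bd * B * (Ad * A) = Ad * B * (Ad * A)
      have key : Bd * B * Ad = Ad := by
        calc Bd * B * Ad = Bd * B * (Aᴴ * Adᴴ * Ad) := by rw [h2]
          _ = (Bd * B * Aᴴ) * (Adᴴ * Ad) := by simp only [Matrix.mul_assoc]
          _ = Aᴴ * Adᴴ * Ad := by rw [hr2', Matrix.mul_assoc]
          _ = Ad := h2
      calc Bd * B * (Ad * A) = (Bd * B * Ad) * A := by simp only [Matrix.mul_assoc]
        _ = Ad * A := by rw [key]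
        _ = Ad * B * (Ad * A) := e2.symm
    · -- A * Ad * (B * Bd) = A * Ad * (B * Ad)
      have key : Aᴴ * (B * Bd) = Aᴴ := by
        have h := congrArg conjTranspose hr1
        rw [conjTranspose_mul, b3] at h
        exact h
      calc A * Ad * (B * Bd) = Adᴴ * Aᴴ * (B * Bd) := by rw [← conjTranspose_mul, a3]
        _ = Adᴴ * (Aᴴ * (B * Bd)) := by rw [Matrix.mul_assoc]
        _ = Adᴴ * Aᴴ := by rw [key]
        _ = A * Ad := by rw [← conjTranspose_mul, a3]
        _ = A * Ad * (B * Ad) := e4.symm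
  · rintro ⟨e1, e2, e3, e4⟩
    have hc : Ad * B * Ad = Ad := by
      calc Ad * B * Ad = (Ad * A * Ad) * B * Ad := by rw [a2]
        _ = Ad * (A * Ad * (B * Ad)) := by simp only [Matrix.mul_assoc]
        _ = Ad * (A * Ad) := by rw [e4]
        _ = Ad := by rw [← Matrix.mul_assoc, a2]
    refine ⟨?_, ?_, hc⟩
    · -- B * Bd * A = A
      have h5 : B * Bd * (A * Ad) = A * Ad := by
        have h := congrArg conjTranspose (e3.trans e4)
        rw [conjTranspose_mul, a3, b3] at h
        exact h
      calc B * Bd * A = B * Bd * (A * Ad * A) := by rw [a1]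
        _ = B * Bd * (A * Ad) * A := by simp only [Matrix.mul_assoc]
        _ = A * Ad * A := by rw [h5]
        _ = A := a1
    · -- Bᴴ * Bdᴴ * Aᴴ = Aᴴ
      have h5 : Ad * A * (Bd * B) = Ad * A := by
        have h := congrArg conjTranspose (e1.trans e2)
        rw [conjTranspose_mul, a4, b4] at h
        exact h
      have h6 : A * (Bd * B) = A := by
        calc A * (Bd * B) = A * Ad * A * (Bd * B) := by rw [a1]
          _ = A * (Ad * A * (Bd * B)) := by simp only [Matrix.mul_assoc]
          _ = A * (Ad * A) := by rw [h5]
          _ = A := by rw [← Matrix.mul_assoc, a1]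
      calc Bᴴ * Bdᴴ * Aᴴ = (A * (Bd * B))ᴴ := by
            rw [conjTranspose_mul, conjTranspose_mul]
        _ = Aᴴ := by rw [h6]
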